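/- Let $m\ge 2$, $\sigma,\tau\in S_r$ on $\{j,\ldots,j+r-1\}$, with data $t^1_\ast, t^2_\ast\in\{0,\ldots,m-1\}$. Then the conjugate $(C^{\tau,m}_{t^2})^{-1}\, C^{\sigma,m}_{t^1}\, C^{\tau,m}_{t^2}$ equals $C^{\tau^{-1}\sigma\tau,m}_{t^3}$ where $t^3_i = |t^2_{\sigma^{-1}(\tau(i))} + t^1_{\tau(i)} - t^2_{\tau(i)}|_m$. -/

import Mathlib

/-- Conjugation of block-shift permutations: for `m ≥ 2`, permutations `σ, τ` of
`{j,…,j+r-1}` and shift data `t¹, t² ∈ {0,…,m-1}`, one has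
`(C^{τ,m}_{t²})⁻¹ * C^{σ,m}_{t¹} * C^{τ,m}_{t²} = C^{τ⁻¹στ,m}_{t³}` where
`t³ i = (t² (σ⁻¹ (τ i)) + t¹ (τ i) - t² (τ i)) % m`
(the subtraction is taken mod `m`, i.e. as `+ (m - t² (τ i))`).
Each `C^{σ,m}_t` is encoded by its defining formula
`C (a i p) = a (σ i) ((p + t (σ i)) % m)` on the blocks `a i p = 1+m(i-1)+p`,
fixing everything else. -/
theorem blockShift_conj (m r j : ℕ) (hm : 2 ≤ m) (hr : 1 ≤ r) (hj : 1 ≤ j)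
    (σ τ : Equiv.Perm ℕ)
    (hσ : ∀ x, x < j ∨ j + r - 1 < x → σ x = x)
    (hτ : ∀ x, x < j ∨ j + r - 1 < x → τ x = x)
    (t1 t2 t3 : ℕ → ℕ) (ht1 : ∀ i, t1 i < m) (ht2 : ∀ i, t2 i < m)
    (ht3 : ∀ i, j ≤ i → i ≤ j + r - 1 →
      t3 i = (t2 (σ⁻¹ (τ i)) + t1 (τ i) + (m - t2 (τ i))) % m)
    (C1 C2 C3 : Equiv.Perm ℕ)
    (hC1 : ∀ i p, j ≤ i → i ≤ j + r - 1 → p < m →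
      C1 (1 + m * (i - 1) + p) = 1 + m * (σ i - 1) + (p + t1 (σ i)) % m)
    (hC1fix : ∀ x, (∀ i p, j ≤ i → i ≤ j + r - 1 → p < m → x ≠ 1 + m * (i - 1) + p) →
      C1 x = x)
    (hC2 : ∀ i p, j ≤ i → i ≤ j + r - 1 → p < m →
      C2 (1 + m * (i - 1) + p) = 1 + m * (τ i - 1) + (p + t2 (τ i)) % m)
    (hC2fix : ∀ x, (∀ i p, j ≤ i → i ≤ j + r - 1 → p < m → x ≠ 1 + m * (i - 1) + p) →
      C2 x = x)
    (hC3 : ∀ i p, j ≤ i → i ≤ j + r - 1 → p < m →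
      C3 (1 + m * (i - 1) + p) =
        1 + m * ((τ⁻¹ * σ * τ) i - 1) + (p + t3 ((τ⁻¹ * σ * τ) i)) % m)
    (hC3fix : ∀ x, (∀ i p, j ≤ i → i ≤ j + r - 1 → p < m → x ≠ 1 + m * (i - 1) + p) →
      C3 x = x) :
    C2⁻¹ * C1 * C2 = C3 := by
  -- helper: permutations fixing the complement preserve the interval
  have mem : ∀ (π : Equiv.Perm ℕ), (∀ x, x < j ∨ j + r - 1 < x → π x = x) →
      ∀ i, j ≤ i → i ≤ j + r - 1 → j ≤ π i ∧ π i ≤ j + r - 1 := by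
    intro π hπ i h1 h2
    by_contra hc
    have hout : π i < j ∨ j + r - 1 < π i := by omega
    have := hπ (π i) hout
    have hii := π.injective this
    omega
  have hτinv : ∀ x, x < j ∨ j + r - 1 < x → τ⁻¹ x = x := by
    intro x hx
    rw [Equiv.Perm.inv_def]
    exact (Equiv.symm_apply_eq τ).mpr (hτ x hx).symm
  suffices h : C1 * C2 = C2 * C3 by
    rw [mul_assoc, h, ← mul_assoc, inv_mul_cancel, one_mul]
  ext x
  simp only [Equiv.Perm.mul_apply]
  by_cases hx : ∃ i p, j ≤ i ∧ i ≤ j + r - 1 ∧ p < m ∧ x = 1 + m * (i - 1) + p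
  · obtain ⟨i, p, hi1, hi2, hp, rfl⟩ := hx
    have hτi := mem τ hτ i hi1 hi2
    have hστi := mem σ hσ (τ i) hτi.1 hτi.2
    set k := (τ⁻¹ * σ * τ) i with hk
    have hkτ : τ k = σ (τ i) := by
      simp [hk, Equiv.Perm.mul_apply]
    have hkmem : j ≤ k ∧ k ≤ j + r - 1 := by
      have := mem τ⁻¹ hτinv (σ (τ i)) hστi.1 hστi.2
      simpa [hk, Equiv.Perm.mul_apply] using this
    have hσik : σ⁻¹ (τ k) = τ i := by
      rw [hkτ]; exact σ.symm_apply_apply _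
    rw [hC2 i p hi1 hi2 hp,
        hC1 (τ i) ((p + t2 (τ i)) % m) hτi.1 hτi.2 (Nat.mod_lt _ (by omega)),
        hC3 i p hi1 hi2 hp, ← hk,
        hC2 k ((p + t3 k) % m) hkmem.1 hkmem.2 (Nat.mod_lt _ (by omega)),
        hkτ, ht3 k hkmem.1 hkmem.2, hσik]
    congr 1
    have h2' := ht2 (σ (τ i))
    rw [hkτ, Nat.mod_add_mod, Nat.add_mod_mod, Nat.mod_add_mod]
    have : p + (t2 (τ i) + t1 (σ (τ i)) + (m - t2 (σ (τ i)))) + t2 (σ (τ i))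
        = p + t2 (τ i) + t1 (σ (τ i)) + m := by omega
    rw [this, Nat.add_mod_right]
  · push_neg at hx
    have hfix : ∀ i p, j ≤ i → i ≤ j + r - 1 → p < m → x ≠ 1 + m * (i - 1) + p := by
      intro i p h1 h2 h3
      exact hx i p h1 h2 h3
    rw [hC2fix x hfix, hC1fix x hfix, hC3fix x hfix, hC2fix x hfix]
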